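/- Let F be a field and let R : U₃(F) → U₃(F) be any F-linear operator such that R(e₁₂) = R(e₁₃) = 0 and R(e₁₁), R(e₂₂), R(e₃₃), R(e₂₃) all lie in the linear span of e₁₂ and e₁₃. Then R is a Rota–Baxter operator of weight 0 on U₃(F). -/

import Mathlib

set_option synthInstance.maxHeartbeats 1000000
set_option maxHeartbeats 1000000

/-- The algebra of 3×3 upper-triangular matrices over `F`. -/
def UT3 (F : Type*) [Field F] : Subalgebra F (Matrix (Fin 3) (Fin 3) F) where
  carrier := {M | ∀ i j : Fin 3, j < i → M i j = 0}
  mul_mem' := by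
    intro A B hA hB i j hij
    show (A * B) i j = 0
    rw [Matrix.mul_apply]
    refine Finset.sum_eq_zero fun k _ => ?_
    rcases lt_or_ge k i with hk | hk
    · rw [hA i k hk, zero_mul]
    · rw [hB k j (lt_of_lt_of_le hij hk), mul_zero]
  one_mem' := by
    intro i j hij
    exact Matrix.one_apply_ne (fun h => absurd hij (by rw [h]; exact lt_irrefl j))
  add_mem' := by
    intro A B hA hB i j hij
    show A i j + B i j = 0
    rw [hA i j hij, hB i j hij, add_zero]
  zero_mem' := fun i j _ => rfl
  algebraMap_mem' := by
    intro r i j hij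
    show algebraMap F (Matrix (Fin 3) (Fin 3) F) r i j = 0
    rw [Matrix.algebraMap_eq_diagonal]
    exact Matrix.diagonal_apply_ne _ (fun h => absurd hij (by rw [h]; exact lt_irrefl j))

/-- The matrix unit `e_{ij}` as an element of `UT3 F`, for `i ≤ j`. -/
def eU {F : Type*} [Field F] (i j : Fin 3) (h : i ≤ j) : UT3 F :=
  ⟨Matrix.single i j 1, by
    intro a b hba
    by_cases hia : i = a
    · by_cases hjb : j = b
      · exact absurd hba (by rw [← hia, ← hjb]; exact not_lt.mpr h)
      · exact Matrix.single_apply_of_ne _ _ _ _ _ (by tauto)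
    · exact Matrix.single_apply_of_ne _ _ _ _ _ (by tauto)⟩

/-- A Rota–Baxter operator of weight zero: an `F`-linear map `R` with
`R(x)R(y) = R(R(x)y + xR(y))` for all `x, y`. -/
def IsRotaBaxterW0 {F : Type*} [Field F] {A : Type*} [Ring A] [Algebra F A]
    (R : A →ₗ[F] A) : Prop :=
  ∀ x y : A, R x * R y = R (R x * y + x * R y)

namespace RBaux

open Matrix

variable {F : Type*} [Field F]

/-- The generic matrix `s e₁₂ + t e₁₃`. -/
def Mst (s t : F) : Matrix (Fin 3) (Fin 3) F :=
  s • single 0 1 1 + t • single 0 2 1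

lemma mem_span_iff_val (z : UT3 F) :
    z ∈ Submodule.span F {eU 0 1 (by decide), eU 0 2 (by decide)} ↔
      ∃ s t : F, (z : Matrix (Fin 3) (Fin 3) F) = Mst s t := by
  rw [Submodule.mem_span_pair]
  constructor
  · rintro ⟨a, b, rfl⟩
    exact ⟨a, b, rfl⟩
  · rintro ⟨s, t, h⟩
    refine ⟨s, t, Subtype.ext ?_⟩
    exact h.symm

lemma Mst_mul_Mst (s t u v : F) : Mst s t * Mst u v = 0 := by
  ext i j
  fin_cases i <;> fin_cases j <;>
    simp [Mst, Matrix.mul_apply, Fin.sum_univ_three, Matrix.single]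

lemma Mst_mul (s t : F) (N : Matrix (Fin 3) (Fin 3) F)
    (h10 : N 1 0 = 0) (h20 : N 2 0 = 0) (h21 : N 2 1 = 0) :
    Mst s t * N = Mst (s * N 1 1) (s * N 1 2 + t * N 2 2) := by
  ext i j
  fin_cases i <;> fin_cases j <;>
    simp [Mst, Matrix.mul_apply, Fin.sum_univ_three, Matrix.single, h10, h20, h21]

lemma mul_Mst (s t : F) (N : Matrix (Fin 3) (Fin 3) F)
    (h10 : N 1 0 = 0) (h20 : N 2 0 = 0) :
    N * Mst s t = Mst (N 0 0 * s) (N 0 0 * t) := by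
  ext i j
  fin_cases i <;> fin_cases j <;>
    simp [Mst, Matrix.mul_apply, Fin.sum_univ_three, Matrix.single, h10, h20]

/-- Decomposition of an upper triangular matrix into the six basis elements. -/
lemma decomp (x : UT3 F) :
    x = (x : Matrix (Fin 3) (Fin 3) F) 0 0 • eU 0 0 (by decide)
      + (x : Matrix (Fin 3) (Fin 3) F) 0 1 • eU 0 1 (by decide)
      + (x : Matrix (Fin 3) (Fin 3) F) 0 2 • eU 0 2 (by decide)
      + (x : Matrix (Fin 3) (Fin 3) F) 1 1 • eU 1 1 (by decide)
      + (x : Matrix (Fin 3) (Fin 3) F) 1 2 • eU 1 2 (by decide)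
      + (x : Matrix (Fin 3) (Fin 3) F) 2 2 • eU 2 2 (by decide) := by
  apply Subtype.ext
  have h10 := x.2 1 0 (by decide)
  have h20 := x.2 2 0 (by decide)
  have h21 := x.2 2 1 (by decide)
  ext i j
  fin_cases i <;> fin_cases j <;>
    simp [eU, Matrix.single, h10, h20, h21]

end RBaux

/-- Any linear operator `R` on `U₃(F)` with `R(e₁₂) = R(e₁₃) = 0` and
`R(e₁₁), R(e₂₂), R(e₃₃), R(e₂₃) ∈ L(e₁₂, e₁₃)` is a Rota–Baxter operator of weight 0. -/
theorem rotaBaxter_span_e12_e13 (F : Type*) [Field F] (R : UT3 F →ₗ[F] UT3 F)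
    (h12 : R (eU 0 1 (by decide)) = 0)
    (h13 : R (eU 0 2 (by decide)) = 0)
    (h11 : R (eU 0 0 (by decide)) ∈
      Submodule.span F {eU 0 1 (by decide), eU 0 2 (by decide)})
    (h22 : R (eU 1 1 (by decide)) ∈
      Submodule.span F {eU 0 1 (by decide), eU 0 2 (by decide)})
    (h33 : R (eU 2 2 (by decide)) ∈
      Submodule.span F {eU 0 1 (by decide), eU 0 2 (by decide)})
    (h23 : R (eU 1 2 (by decide)) ∈
      Submodule.span F {eU 0 1 (by decide), eU 0 2 (by decide)}) :
    IsRotaBaxterW0 R := by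
  open RBaux in
  set S : Submodule F (UT3 F) :=
    Submodule.span F {eU 0 1 (by decide), eU 0 2 (by decide)} with hS
  -- R vanishes on S
  have hR0 : ∀ z : UT3 F, z ∈ S → R z = 0 := by
    intro z hz
    rw [hS, Submodule.mem_span_pair] at hz
    obtain ⟨a, b, rfl⟩ := hz
    simp [h12, h13]
  -- R maps everything into S
  have hRS : ∀ x : UT3 F, R x ∈ S := by
    intro x
    rw [RBaux.decomp x, map_add, map_add, map_add, map_add, map_add,
      map_smul, map_smul, map_smul, map_smul, map_smul, map_smul, h12, h13]
    refine S.add_mem (S.add_mem (S.add_mem (S.add_mem (S.add_mem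
      (S.smul_mem _ h11) ?_) ?_) (S.smul_mem _ h22)) (S.smul_mem _ h23))
      (S.smul_mem _ h33) <;> simp
  intro x y
  obtain ⟨s, t, hx⟩ := (RBaux.mem_span_iff_val (R x)).mp (hRS x)
  obtain ⟨u, v, hy⟩ := (RBaux.mem_span_iff_val (R y)).mp (hRS y)
  have hxy : R x * R y = 0 := by
    apply Subtype.ext
    show (R x : Matrix (Fin 3) (Fin 3) F) * (R y : Matrix (Fin 3) (Fin 3) F) = 0
    rw [hx, hy, RBaux.Mst_mul_Mst]
  have hmem : R x * y + x * R y ∈ S := by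
    refine S.add_mem ?_ ?_
    · rw [RBaux.mem_span_iff_val]
      refine ⟨s * (y : Matrix (Fin 3) (Fin 3) F) 1 1,
        s * (y : Matrix (Fin 3) (Fin 3) F) 1 2 + t * (y : Matrix (Fin 3) (Fin 3) F) 2 2, ?_⟩
      show (R x : Matrix (Fin 3) (Fin 3) F) * (y : Matrix (Fin 3) (Fin 3) F) = _
      rw [hx]
      exact RBaux.Mst_mul _ _ _ (y.2 1 0 (by decide)) (y.2 2 0 (by decide)) (y.2 2 1 (by decide))
    · rw [RBaux.mem_span_iff_val]
      refine ⟨(x : Matrix (Fin 3) (Fin 3) F) 0 0 * u,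
        (x : Matrix (Fin 3) (Fin 3) F) 0 0 * v, ?_⟩
      show (x : Matrix (Fin 3) (Fin 3) F) * (R y : Matrix (Fin 3) (Fin 3) F) = _
      rw [hy]
      exact RBaux.mul_Mst _ _ _ (x.2 1 0 (by decide)) (x.2 2 0 (by decide))
  rw [hxy, hR0 _ hmem]
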